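/- Let Ω ⊆ ℝⁿ with n ≥ 2 be an open set, let 0 < δ < 1, and let A: Ω → ℝ^{n×n} be a matrix-valued function such that at every point x ∈ Ω the matrix A(x) is symmetric, nonzero, and satisfies the Cordes condition (n−1+δ)·|A(x)|² ≤ (tr A(x))². Then there exist constants c = c(n,δ) > 0 and C = C(n,δ) > 0 such that for every u ∈ C³(Ω) the pointwise inequality c·|D²u|² ≤ div(D²u·Du − Δu·Du) + (C/|A|²)·⟨A,D²u⟩² holds everywhere in Ω. -/

import Mathlib

open Matrix

/-- The Jacobian matrix `DX` of a vector field `X : ℝⁿ → ℝⁿ`. -/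
noncomputable def jac {n : ℕ} (X : (Fin n → ℝ) → (Fin n → ℝ)) (x : Fin n → ℝ) :
    Matrix (Fin n) (Fin n) ℝ :=
  Matrix.of fun i j => fderiv ℝ X x (Pi.single j 1) i

/-- The divergence `div X = tr(DX)` of a vector field. -/
noncomputable def divg {n : ℕ} (X : (Fin n → ℝ) → (Fin n → ℝ)) (x : Fin n → ℝ) : ℝ :=
  Matrix.trace (jac X x)

/-- The gradient `Du` of a scalar function. -/
noncomputable def grad {n : ℕ} (u : (Fin n → ℝ) → ℝ) (x : Fin n → ℝ) : Fin n → ℝ :=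
  fun i => fderiv ℝ u x (Pi.single i 1)

/-- The Hessian matrix `D²u` of a scalar function. -/
noncomputable def hess {n : ℕ} (u : (Fin n → ℝ) → ℝ) (x : Fin n → ℝ) :
    Matrix (Fin n) (Fin n) ℝ :=
  Matrix.of fun i j => fderiv ℝ (fun y => fderiv ℝ u y (Pi.single i 1)) x (Pi.single j 1)

/-- The Laplacian `Δu = tr(D²u)`. -/
noncomputable def lap {n : ℕ} (u : (Fin n → ℝ) → ℝ) (x : Fin n → ℝ) : ℝ :=
  Matrix.trace (hess u x)

open Topology

theorem div_ident (n : ℕ) (Ω : Set (Fin n → ℝ)) (hΩ : IsOpen Ω)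
    (u : (Fin n → ℝ) → ℝ) (hu : ContDiffOn ℝ 3 u Ω) (x : Fin n → ℝ) (hx : x ∈ Ω) :
    divg (fun y => (hess u y).mulVec (grad u y) - lap u y • grad u y) x
      = (∑ i, ∑ j, hess u x i j ^ 2) - (lap u x)^2 := by
  have hxΩ : Ω ∈ 𝓝 x := hΩ.mem_nhds hx
  set e : Fin n → Fin n → ℝ := fun i => Pi.single i 1 with he
  have hfd : ContDiffOn ℝ 2 (fun y => fderiv ℝ u y) Ω :=
    hu.fderiv_of_isOpen hΩ (by norm_num)
  set g : Fin n → (Fin n → ℝ) → ℝ := fun i y => fderiv ℝ u y (e i) with hgdef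
  have hg : ∀ i, ContDiffOn ℝ 2 (g i) Ω := fun i => hfd.clm_apply contDiffOn_const
  have hgd : ∀ i, ContDiffOn ℝ 1 (fun y => fderiv ℝ (g i) y) Ω := fun i =>
    (hg i).fderiv_of_isOpen hΩ (by norm_num)
  set M : Fin n → Fin n → (Fin n → ℝ) → ℝ := fun i j y => fderiv ℝ (g i) y (e j) with hMdef
  have hM : ∀ i j, ContDiffOn ℝ 1 (M i j) Ω := fun i j => (hgd i).clm_apply contDiffOn_const
  have hMd : ∀ i j, DifferentiableAt ℝ (M i j) x := fun i j =>
    (((hM i j).differentiableOn (by norm_num)).differentiableAt hxΩ)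
  have hgdx : ∀ i, DifferentiableAt ℝ (g i) x := fun i =>
    (((hg i).differentiableOn (by norm_num)).differentiableAt hxΩ)
  have hfdiffu : DifferentiableAt ℝ (fun y => fderiv ℝ u y) x :=
    ((hfd.differentiableOn (by norm_num)).differentiableAt hxΩ)
  have happ : ∀ (F : (Fin n → ℝ) → ((Fin n → ℝ) →L[ℝ] ℝ)), DifferentiableAt ℝ F x →
      ∀ v w : Fin n → ℝ, fderiv ℝ (fun y => F y v) x w = fderiv ℝ F x w v := by
    intro F hF v w
    rw [fderiv_clm_apply hF (differentiableAt_const v)]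
    simp
  -- Hessian symmetry at x
  have hHsymm : ∀ i j, M i j x = M j i x := by
    intro i j
    have hsym := ((hu x hx).contDiffAt hxΩ).isSymmSndFDerivAt (by norm_num)
    have h1 : M i j x = fderiv ℝ (fderiv ℝ u) x (e j) (e i) := happ _ hfdiffu (e i) (e j)
    have h2 : M j i x = fderiv ℝ (fderiv ℝ u) x (e i) (e j) := happ _ hfdiffu (e j) (e i)
    rw [h1, h2, hsym]
  -- third derivative symmetry
  have hfdiffg : ∀ i, DifferentiableAt ℝ (fun y => fderiv ℝ (g i) y) x := fun i =>
    (((hgd i).differentiableOn (by norm_num)).differentiableAt hxΩ)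
  have hsymm3 : ∀ i j k, fderiv ℝ (M i j) x (e k) = fderiv ℝ (M i k) x (e j) := by
    intro i j k
    have hsym := ((hg i x hx).contDiffAt hxΩ).isSymmSndFDerivAt (by norm_num)
    have h1 : fderiv ℝ (M i j) x (e k) = fderiv ℝ (fderiv ℝ (g i)) x (e k) (e j) :=
      happ _ (hfdiffg i) (e j) (e k)
    have h2 : fderiv ℝ (M i k) x (e j) = fderiv ℝ (fderiv ℝ (g i)) x (e j) (e k) :=
      happ _ (hfdiffg i) (e k) (e j)
    rw [h1, h2, hsym]
  -- the components of the vector field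
  set φ : Fin n → (Fin n → ℝ) → ℝ :=
    fun i y => (∑ j, M i j y * g j y) - (∑ k, M k k y) * g i y with hφdef
  have hφdiff : ∀ i, DifferentiableAt ℝ (φ i) x := by
    intro i
    apply DifferentiableAt.sub
    · exact DifferentiableAt.fun_sum (fun j _ => (hMd i j).mul (hgdx j))
    · exact (DifferentiableAt.fun_sum (fun k _ => hMd k k)).mul (hgdx i)
  have hXeq : (fun y => (hess u y).mulVec (grad u y) - lap u y • grad u y)
      = fun y i => φ i y := by
    funext y i
    simp only [Pi.sub_apply, Pi.smul_apply, smul_eq_mul, Matrix.mulVec, dotProduct,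
      hφdef, lap, Matrix.trace, Matrix.diag]
    rfl
  -- divergence as a sum of component derivatives
  have hdiv : divg (fun y => (hess u y).mulVec (grad u y) - lap u y • grad u y) x
      = ∑ i, fderiv ℝ (φ i) x (e i) := by
    rw [hXeq]
    simp only [divg, jac, Matrix.trace, Matrix.diag, Matrix.of_apply]
    rw [fderiv_pi (fun i => hφdiff i)]
    rfl
  -- compute each component derivative
  have hcomp : ∀ i, fderiv ℝ (φ i) x (e i)
      = (∑ j, (M i j x * M j i x + g j x * fderiv ℝ (M i j) x (e i)))
        - ((∑ k, M k k x) * M i i x + g i x * ∑ k, fderiv ℝ (M k k) x (e i)) := by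
    intro i
    have h1 : fderiv ℝ (fun y => ∑ j, M i j y * g j y) x (e i)
        = ∑ j, (M i j x * M j i x + g j x * fderiv ℝ (M i j) x (e i)) := by
      rw [fderiv_fun_sum (A := fun j y => M i j y * g j y) (fun j _ => (hMd i j).mul (hgdx j))]
      simp only [ContinuousLinearMap.coe_sum', Finset.sum_apply]
      refine Finset.sum_congr rfl (fun j _ => ?_)
      rw [fderiv_fun_mul (hMd i j) (hgdx j)]
      simp only [ContinuousLinearMap.add_apply, ContinuousLinearMap.coe_smul',
        Pi.smul_apply, smul_eq_mul]
      rfl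
    have h2 : fderiv ℝ (fun y => (∑ k, M k k y) * g i y) x (e i)
        = (∑ k, M k k x) * M i i x + g i x * ∑ k, fderiv ℝ (M k k) x (e i) := by
      rw [fderiv_fun_mul (DifferentiableAt.fun_sum (fun k _ => hMd k k)) (hgdx i)]
      simp only [ContinuousLinearMap.add_apply, ContinuousLinearMap.coe_smul',
        Pi.smul_apply, smul_eq_mul]
      rw [fderiv_fun_sum (fun k _ => hMd k k)]
      simp only [ContinuousLinearMap.coe_sum', Finset.sum_apply]
      rfl
    have h3 : fderiv ℝ (φ i) x
        = fderiv ℝ (fun y => (∑ j, M i j y * g j y) - (∑ k, M k k y) * g i y) x := rfl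
    rw [h3, fderiv_fun_sub (f := fun y => ∑ j, M i j y * g j y) (g := fun y => (∑ k, M k k y) * g i y) (DifferentiableAt.fun_sum (fun j _ => (hMd i j).mul (hgdx j)))
      ((DifferentiableAt.fun_sum (fun k _ => hMd k k)).mul (hgdx i))]
    simp only [ContinuousLinearMap.sub_apply]
    rw [h1, h2]
  rw [hdiv]
  have hlap : lap u x = ∑ k, M k k x := rfl
  have hkey : ∑ i, fderiv ℝ (φ i) x (e i)
      = (∑ i, ∑ j, M i j x * M j i x) + (∑ i, ∑ j, g j x * fderiv ℝ (M i j) x (e i))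
        - ((∑ k, M k k x) * ∑ i, M i i x) - ∑ i, g i x * ∑ k, fderiv ℝ (M k k) x (e i) := by
    simp only [hcomp]
    rw [Finset.sum_sub_distrib]
    simp only [Finset.sum_add_distrib, ← Finset.mul_sum]
    ring
  have hcancel : (∑ i, ∑ j, g j x * fderiv ℝ (M i j) x (e i))
      = ∑ i, g i x * ∑ k, fderiv ℝ (M k k) x (e i) := by
    calc ∑ i, ∑ j, g j x * fderiv ℝ (M i j) x (e i)
        = ∑ i, ∑ j, g j x * fderiv ℝ (M i i) x (e j) := by
          refine Finset.sum_congr rfl fun i _ => Finset.sum_congr rfl fun j _ => ?_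
          rw [hsymm3 i j i]
      _ = ∑ j, ∑ i, g j x * fderiv ℝ (M i i) x (e j) := Finset.sum_comm
      _ = ∑ j, g j x * ∑ i, fderiv ℝ (M i i) x (e j) := by
          simp [Finset.mul_sum]
  have hsq : (∑ i, ∑ j, M i j x * M j i x) = ∑ i, ∑ j, hess u x i j ^ 2 := by
    refine Finset.sum_congr rfl fun i _ => Finset.sum_congr rfl fun j _ => ?_
    show M i j x * M j i x = M i j x ^ 2
    rw [hHsymm j i]; ring
  rw [hkey, hcancel, hsq, hlap]
  ring

theorem alg_lem (n : ℕ) (hn : 2 ≤ n) (δ S T P H L : ℝ) (hδ0 : 0 < δ) (hδ1 : δ < 1)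
    (hS : 0 < S) (hH : 0 ≤ H)
    (hCS : (S*L - T*P)^2 ≤ S*(n*S - T^2)*H)
    (hT : T^2 ≤ n*S)
    (hCordes : ((n:ℝ) - 1 + δ)*S ≤ T^2) :
    (δ/2) * H ≤ (H - L^2) + ((n*(2-δ)/δ)/S)*P^2 := by
  have e1 : (S*L - T*P)^2 ≤ (1-δ)*S^2*H := by
    nlinarith [mul_nonneg (mul_nonneg (sub_nonneg.2 hCordes) hS.le) hH]
  have e3 : 2*δ*(1-δ)*(S*L)^2 ≤ δ*(2-δ)*(S*L-T*P)^2 + 2*(1-δ)*(2-δ)*(T*P)^2 := by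
    nlinarith [sq_nonneg (δ*(S*L-T*P) - 2*(1-δ)*(T*P))]
  have e4 : (T*P)^2 ≤ n*S*P^2 := by
    nlinarith [mul_nonneg (sub_nonneg.2 hT) (sq_nonneg P)]
  have c1 : (0:ℝ) ≤ δ*(2-δ) := by nlinarith
  have c2 : (0:ℝ) ≤ 2*(1-δ)*(2-δ) := by nlinarith
  have e1' := mul_le_mul_of_nonneg_left e1 c1
  have e4' := mul_le_mul_of_nonneg_left e4 c2
  have e5 : 2*δ*(1-δ)*(S*L)^2
      ≤ δ*(2-δ)*((1-δ)*S^2*H) + 2*(1-δ)*(2-δ)*(n*S*P^2) := by nlinarith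
  rw [← sub_le_iff_le_add', div_div, div_mul_eq_mul_div, div_mul_eq_mul_div, le_div_iff₀ (by positivity)]
  nlinarith [e5, mul_pos (show (0:ℝ) < 2*(1-δ) by linarith) hS, hS, hδ0,
    mul_pos hS hS, sq_nonneg L, sq_nonneg P]



set_option maxHeartbeats 1000000 in
/-- Talenti's inequality under the Cordes condition. -/
theorem stmt_15 (n : ℕ) (hn : 2 ≤ n) (Ω : Set (Fin n → ℝ)) (hΩ : IsOpen Ω)
    (δ : ℝ) (hδ0 : 0 < δ) (hδ1 : δ < 1)
    (A : (Fin n → ℝ) → Matrix (Fin n) (Fin n) ℝ)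
    (hA : ∀ x ∈ Ω, (A x).IsSymm ∧ A x ≠ 0 ∧
      ((n : ℝ) - 1 + δ) * (∑ i, ∑ j, A x i j ^ 2) ≤ (Matrix.trace (A x)) ^ 2) :
    ∃ c C : ℝ, 0 < c ∧ 0 < C ∧
      ∀ u : (Fin n → ℝ) → ℝ, ContDiffOn ℝ 3 u Ω →
        ∀ x ∈ Ω,
          c * (∑ i, ∑ j, hess u x i j ^ 2) ≤
            divg (fun y => (hess u y).mulVec (grad u y) - lap u y • grad u y) x
              + (C / (∑ i, ∑ j, A x i j ^ 2)) * (∑ i, ∑ j, A x i j * hess u x i j) ^ 2 := by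
  have hn' : (0:ℝ) < n := by
    have : (2:ℝ) ≤ n := by exact_mod_cast hn
    linarith
  refine ⟨δ/2, (n:ℝ)*(2-δ)/δ, by positivity,
    div_pos (mul_pos hn' (by linarith)) hδ0, ?_⟩
  intro u hu x hx
  obtain ⟨hsymA, hA0, hCordes⟩ := hA x hx
  rw [div_ident n Ω hΩ u hu x hx]
  set S : ℝ := ∑ i, ∑ j, A x i j ^ 2 with hSdef
  set T : ℝ := Matrix.trace (A x) with hTdef
  set P : ℝ := ∑ i, ∑ j, A x i j * hess u x i j with hPdef
  set H : ℝ := ∑ i, ∑ j, hess u x i j ^ 2 with hHdef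
  set L : ℝ := lap u x with hLdef
  have hS : 0 < S := by
    rcases lt_or_eq_of_le (by positivity : (0:ℝ) ≤ S) with h | h
    · exact h
    · exfalso
      apply hA0
      ext i j
      have h2 := (Finset.sum_eq_zero_iff_of_nonneg
        (fun i _ => by positivity : ∀ i ∈ Finset.univ, (0:ℝ) ≤ ∑ j, A x i j ^ 2)).1 h.symm
      have h3 := (Finset.sum_eq_zero_iff_of_nonneg
        (fun j _ => by positivity : ∀ j ∈ Finset.univ, (0:ℝ) ≤ A x i j ^ 2)).1
        (h2 i (Finset.mem_univ i))
      have h4 := h3 j (Finset.mem_univ j)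
      have h5 : A x i j = 0 := by
        have := sq_eq_zero_iff.1 h4
        simpa using this
      simpa using h5
  have hH : 0 ≤ H := by positivity
  have hTtr : T = ∑ i, A x i i := by
    simp [hTdef, Matrix.trace, Matrix.diag]
  have hLtr : L = ∑ i, hess u x i i := by
    simp [hLdef, lap, Matrix.trace, Matrix.diag]
  have hT : T^2 ≤ (n:ℝ) * S := by
    have h1 : T^2 ≤ (n:ℝ) * ∑ i, (A x i i)^2 := by
      rw [hTtr]
      have := sq_sum_le_card_mul_sum_sq (s := (Finset.univ : Finset (Fin n)))
        (f := fun i => A x i i)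
      simpa using this
    have h2 : ∑ i, (A x i i)^2 ≤ S := by
      rw [hSdef]
      refine Finset.sum_le_sum (fun i _ => ?_)
      exact Finset.single_le_sum (f := fun j => A x i j ^ 2)
        (fun j _ => by positivity) (Finset.mem_univ i)
    nlinarith
  have hCS : (S*L - T*P)^2 ≤ S*((n:ℝ)*S - T^2)*H := by
    have cs := Finset.sum_mul_sq_le_sq_mul_sq Finset.univ
      (fun p : Fin n × Fin n => S*(if p.1 = p.2 then (1:ℝ) else 0) - T * A x p.1 p.2)
      (fun p : Fin n × Fin n => hess u x p.1 p.2)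
    have hfg : (∑ p : Fin n × Fin n,
        (S*(if p.1 = p.2 then (1:ℝ) else 0) - T * A x p.1 p.2) * hess u x p.1 p.2)
        = S*L - T*P := by
      rw [Fintype.sum_prod_type]
      have hrow : ∀ i, (∑ j, (S*(if i = j then (1:ℝ) else 0) - T * A x i j) * hess u x i j)
          = S * hess u x i i - T * ∑ j, A x i j * hess u x i j := by
        intro i
        simp only [sub_mul, Finset.sum_sub_distrib]
        congr 1
        · simp [ite_mul, mul_ite, Finset.sum_ite_eq, mul_assoc]
        · rw [Finset.mul_sum]
          exact Finset.sum_congr rfl (fun j _ => by ring)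
      simp only [hrow, Finset.sum_sub_distrib]
      rw [hLtr, hPdef, Finset.mul_sum, Finset.mul_sum]
    have hgg : (∑ p : Fin n × Fin n, hess u x p.1 p.2 ^ 2) = H := by
      rw [Fintype.sum_prod_type, hHdef]
    have hff : (∑ p : Fin n × Fin n,
        (S*(if p.1 = p.2 then (1:ℝ) else 0) - T * A x p.1 p.2)^2)
        = (n:ℝ)*S^2 - 2*S*T*T + T^2*S := by
      rw [Fintype.sum_prod_type]
      have hrow2 : ∀ i, (∑ j, (S*(if i = j then (1:ℝ) else 0) - T * A x i j)^2)
          = S^2 - 2*S*T*A x i i + T^2 * ∑ j, A x i j^2 := by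
        intro i
        have expand : ∀ j, (S*(if i = j then (1:ℝ) else 0) - T * A x i j)^2
            = S^2*(if i = j then (1:ℝ) else 0)
              - 2*S*T*((if i = j then (1:ℝ) else 0) * A x i j) + T^2 * A x i j^2 := by
          intro j
          by_cases h : i = j <;> simp [h] <;> ring
        simp only [expand, Finset.sum_add_distrib, Finset.sum_sub_distrib,
          ← Finset.mul_sum]
        simp [Finset.sum_ite_eq, ite_mul, mul_ite]
      simp only [hrow2, Finset.sum_add_distrib, Finset.sum_sub_distrib, Finset.sum_const,
        Finset.card_univ, Fintype.card_fin, nsmul_eq_mul, ← Finset.mul_sum]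
      rw [← hTtr, ← hSdef]
    rw [hfg, hgg, hff] at cs
    nlinarith [cs]
  exact alg_lem n hn δ S T P H L hδ0 hδ1 hS hH hCS hT hCordes
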